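/- arXiv:0711.2549 — 3 statements merged into one kernel-verified Lean document; each statement's English description precedes it below -/
import Mathlib

section
/- Let I be an open interval containing 0 and let y : I → ℝ be differentiable with y'(t) = π(1 + y(t)²) for all t ∈ I and y(0) = v. Then for every t ∈ I one has π t + arctan v ∈ (−π/2, π/2) and y(t) = tan(π t + arctan v). In particular I ⊆ ((−π/2 − arctan v)/π, (π/2 − arctan v)/π). -/
open Real

/-- Any solution on an open interval `I ∋ 0` of `y' = π (1 + y²)`
with `y 0 = v` satisfies `π t + arctan v ∈ (−π/2, π/2)` and
`y t = tan (π t + arctan v)` for all `t ∈ I`; in particular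
`I ⊆ ((−π/2 − arctan v)/π, (π/2 − arctan v)/π)`. -/
theorem first_order_reduction_solution_formula
    (I : Set ℝ) (hI : IsOpen I) (hconn : I.OrdConnected) (h0 : (0 : ℝ) ∈ I)
    (y : ℝ → ℝ) (v : ℝ)
    (hy : ∀ t ∈ I, HasDerivAt y (π * (1 + y t ^ 2)) t)
    (hv : y 0 = v) :
    (∀ t ∈ I, π * t + Real.arctan v ∈ Set.Ioo (-(π / 2)) (π / 2) ∧
      y t = Real.tan (π * t + Real.arctan v)) ∧
    I ⊆ Set.Ioo ((-(π / 2) - Real.arctan v) / π) ((π / 2 - Real.arctan v) / π) := by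
  set g : ℝ → ℝ := fun t => Real.arctan (y t) - π * t with hg
  have hgd : ∀ t ∈ I, HasDerivAt g 0 t := by
    intro t ht
    have h1 : HasDerivAt (fun t => Real.arctan (y t))
        ((1 / (1 + y t ^ 2)) * (π * (1 + y t ^ 2))) t :=
      (Real.hasDerivAt_arctan (y t)).comp t (hy t ht)
    have hpos : (1 : ℝ) + y t ^ 2 ≠ 0 := by positivity
    have h2 : (1 / (1 + y t ^ 2)) * (π * (1 + y t ^ 2)) = π := by
      field_simp
    rw [h2] at h1
    have h3 : HasDerivAt (fun t : ℝ => π * t) π t := by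
      simpa using (hasDerivAt_id t).const_mul π
    have h4 := h1.sub h3
    rw [sub_self] at h4
    exact h4
  have hconst : ∀ t ∈ I, g t = g 0 := by
    intro t ht
    apply hconn.convex.is_const_of_fderivWithin_eq_zero
      (fun s hs => ((hgd s hs).differentiableAt).differentiableWithinAt) _ ht h0
    intro s hs
    rw [fderivWithin_eq_fderiv (hI.uniqueDiffWithinAt hs) (hgd s hs).differentiableAt,
      (hgd s hs).hasFDerivAt.fderiv]
    ext x
    simp
  have key : ∀ t ∈ I, Real.arctan (y t) = π * t + Real.arctan v := by
    intro t ht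
    have := hconst t ht
    simp only [hg, hv, mul_zero, sub_zero] at this
    linarith
  have main : ∀ t ∈ I, π * t + Real.arctan v ∈ Set.Ioo (-(π / 2)) (π / 2) ∧
      y t = Real.tan (π * t + Real.arctan v) := by
    intro t ht
    have hk := key t ht
    constructor
    · rw [← hk]
      exact ⟨Real.neg_pi_div_two_lt_arctan _, Real.arctan_lt_pi_div_two _⟩
    · rw [← hk, Real.tan_arctan]
  refine ⟨main, fun t ht => ?_⟩
  obtain ⟨⟨h1, h2⟩, -⟩ := main t ht
  constructor
  · rw [div_lt_iff₀ Real.pi_pos]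
    linarith [mul_comm π t]
  · rw [lt_div_iff₀ Real.pi_pos]
    linarith [mul_comm π t]
end

section
/- Let I be an open interval containing 0 and let x : I → ℝ be twice differentiable with x''(t) = π(1 + x'(t)²) for all t ∈ I and x'(0) = v. Then every t ∈ I satisfies t < 1/2 − arctan(v)/π. In particular, if v ≥ 0 then every t ∈ I satisfies t < 1/2, so 1 ∉ I: the time-1 exponential map of the SODE ẍ = π(1 + ẋ²) on ℝ is undefined at every initial velocity v ≥ 0. -/
open Real

/-- Any solution on an open interval `I ∋ 0` of the SODE
`ẍ = π (1 + ẋ²)` with initial velocity `x'(0) = v` satisfies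
`t < 1/2 − arctan v / π` for every `t ∈ I`; in particular, if `v ≥ 0` then
every `t ∈ I` satisfies `t < 1/2`, so `1 ∉ I`: the time-1 exponential map of
this SODE is undefined at every initial velocity `v ≥ 0`. -/
theorem time_one_exponential_undefined
    (I : Set ℝ) (hI : IsOpen I) (hconn : I.OrdConnected) (h0 : (0 : ℝ) ∈ I)
    (x x' : ℝ → ℝ) (v : ℝ)
    (hx : ∀ t ∈ I, HasDerivAt x (x' t) t)
    (hx' : ∀ t ∈ I, HasDerivAt x' (π * (1 + x' t ^ 2)) t)
    (hv : x' 0 = v) :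
    (∀ t ∈ I, t < 1 / 2 - Real.arctan v / π) ∧
    (0 ≤ v → (∀ t ∈ I, t < 1 / 2) ∧ (1 : ℝ) ∉ I) := by
  have hconv : Convex ℝ I := convex_iff_ordConnected.mpr hconn
  set g : ℝ → ℝ := fun t => Real.arctan (x' t) - π * t with hg_def
  have hg : ∀ t ∈ I, HasDerivAt g 0 t := by
    intro t ht
    have h1 : HasDerivAt (fun t => Real.arctan (x' t))
        (1 / (1 + x' t ^ 2) * (π * (1 + x' t ^ 2))) t :=
      (Real.hasDerivAt_arctan (x' t)).comp t (hx' t ht)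
    have hpos : (0:ℝ) < 1 + x' t ^ 2 := by positivity
    have h1' : HasDerivAt (fun t => Real.arctan (x' t)) π t := by
      convert h1 using 1; field_simp
    have h2 : HasDerivAt (fun t : ℝ => π * t) π t := by
      simpa using (hasDerivAt_id t).const_mul π
    have h3 := h1'.sub h2
    rw [sub_self] at h3
    exact h3
  have hconst : ∀ t ∈ I, g t = g 0 := by
    intro t ht
    have := hconv.norm_image_sub_le_of_norm_hasDerivWithin_le
      (f := g) (f' := fun _ => 0) (C := 0)
      (fun s hs => (hg s hs).hasDerivWithinAt) (fun s _ => by simp) h0 ht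
    have h0' : ‖g t - g 0‖ ≤ 0 := by simpa using this
    have := le_antisymm h0' (norm_nonneg _)
    rwa [norm_eq_zero, sub_eq_zero] at this
  have key : ∀ t ∈ I, t < 1 / 2 - Real.arctan v / π := by
    intro t ht
    have hc := hconst t ht
    simp only [hg_def, hv, mul_zero, sub_zero] at hc
    -- arctan (x' t) = arctan v + π * t
    have hlt : Real.arctan v + π * t < π / 2 := by
      have : Real.arctan (x' t) < π / 2 := Real.arctan_lt_pi_div_two _
      linarith [hc]
    have hπ : (0:ℝ) < π := Real.pi_pos
    have h3 : t < (π / 2 - Real.arctan v) / π := by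
      rw [lt_div_iff₀ hπ]; nlinarith
    have h4 : (π / 2 - Real.arctan v) / π = 1 / 2 - Real.arctan v / π := by
      field_simp
    rw [h4] at h3; exact h3
  refine ⟨key, fun hvnn => ?_⟩
  have h2 : ∀ t ∈ I, t < 1 / 2 := by
    intro t ht
    have := key t ht
    have : Real.arctan v / π ≥ 0 :=
      div_nonneg (by simpa [Real.arctan_zero] using Real.arctan_strictMono.monotone hvnn) Real.pi_pos.le
    linarith [key t ht]
  exact ⟨h2, fun h1 => by linarith [h2 1 h1]⟩
end

section
/- Let 𝒮 : ℝⁿ × ℝⁿ → ℝⁿ be continuously differentiable, F(x,y) = (y, 𝒮(x,y)), p ∈ ℝⁿ, and let Φ be a continuously differentiable local flow of F on an open set Ω containing (0,(p,0)) (so Φ(0,z) = z and ∂Φ/∂t = F ∘ Φ on Ω). Then the derivative with respect to v of the map v ↦ pr₁ Φ(t, (p, v)) at v = 0 satisfies D_v[pr₁ Φ(t, (p, ·))](0) = t·Id + o(t) as t → 0; in particular this derivative is an invertible linear map of ℝⁿ for all sufficiently small t ≠ 0. -/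
open Topology Asymptotics

open Metric MeasureTheory Set

set_option maxHeartbeats 2000000 in
set_option synthInstance.maxHeartbeats 400000 in
/-- With `𝒮` a `C¹` SODE, `F(x,y) = (y, 𝒮(x,y))` and `Φ` a `C¹`
local flow of `F` near `(0,(p,0))`, the derivative at `v = 0` of the map
`v ↦ pr₁ Φ(t,(p,v))` equals `t·Id + o(t)` as `t → 0`; in particular it is an
invertible linear map of `ℝⁿ` for all sufficiently small `t ≠ 0`. -/
theorem derivative_of_exponential_is_t_Id_plus_little_o
    (n : ℕ)
    (S : (Fin n → ℝ) × (Fin n → ℝ) → (Fin n → ℝ))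
    (hS : ContDiff ℝ 1 S)
    (F : (Fin n → ℝ) × (Fin n → ℝ) → (Fin n → ℝ) × (Fin n → ℝ))
    (hF : ∀ x y, F (x, y) = (y, S (x, y)))
    (p : Fin n → ℝ)
    (Ω : Set (ℝ × ((Fin n → ℝ) × (Fin n → ℝ))))
    (hΩ : IsOpen Ω)
    (hmem : ((0 : ℝ), (p, (0 : Fin n → ℝ))) ∈ Ω)
    (Φ : ℝ × ((Fin n → ℝ) × (Fin n → ℝ)) → (Fin n → ℝ) × (Fin n → ℝ))
    (hΦC1 : ContDiffOn ℝ 1 Φ Ω)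
    (hΦ0 : ∀ z, ((0 : ℝ), z) ∈ Ω → Φ (0, z) = z)
    (hΦflow : ∀ q ∈ Ω, HasDerivAt (fun t => Φ (t, q.2)) (F (Φ q)) q.1) :
    (fun t : ℝ =>
        fderiv ℝ (fun v : Fin n → ℝ => (Φ (t, (p, v))).1) 0 -
          t • ContinuousLinearMap.id ℝ (Fin n → ℝ))
      =o[𝓝 (0 : ℝ)] (fun t : ℝ => t) ∧
    ∃ ε₀ > 0, ∀ t : ℝ, 0 < |t| → |t| < ε₀ →
      IsUnit (fderiv ℝ (fun v : Fin n → ℝ => (Φ (t, (p, v))).1) 0) := by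
  classical
  have hFeq : F = fun q => (q.2, S q) := by
    funext q
    simpa using hF q.1 q.2
  have hFC1 : ContDiff ℝ 1 F := by
    rw [hFeq]; exact (contDiff_snd (𝕜 := ℝ)).prodMk hS
  set q₀ : (Fin n → ℝ) × (Fin n → ℝ) := (p, 0) with hq₀def
  -- a product box inside Ω
  obtain ⟨ε, hε, hball⟩ := Metric.isOpen_iff.1 hΩ _ hmem
  set δ : ℝ := ε / 2 with hδdef
  have hδ : 0 < δ := by positivity
  have hbox : Metric.closedBall (0:ℝ) δ ×ˢ Metric.closedBall q₀ δ ⊆ Ω := by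
    rintro ⟨s, z⟩ ⟨hs, hz⟩
    apply hball
    rw [Metric.mem_ball, Prod.dist_eq]
    rw [Metric.mem_closedBall] at hs hz
    have : δ < ε := by rw [hδdef]; linarith
    exact lt_of_le_of_lt (max_le hs hz) this
  have hΦdiff : ∀ q ∈ Ω, DifferentiableAt ℝ Φ q := fun q hq =>
    ((hΦC1.differentiableOn one_ne_zero).differentiableAt (hΩ.mem_nhds hq))
  have hDcont : ContinuousOn (fderiv ℝ Φ) Ω :=
    hΦC1.continuousOn_fderiv_of_isOpen hΩ le_rfl
  set ι : ((Fin n → ℝ) × (Fin n → ℝ)) →L[ℝ] ℝ × ((Fin n → ℝ) × (Fin n → ℝ)) :=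
    ContinuousLinearMap.inr ℝ ℝ _ with hιdef
  set ιv : (Fin n → ℝ) →L[ℝ] ((Fin n → ℝ) × (Fin n → ℝ)) :=
    ContinuousLinearMap.inr ℝ _ _ with hιvdef
  set Hf : ℝ × ((Fin n → ℝ) × (Fin n → ℝ)) →
      (((Fin n → ℝ) × (Fin n → ℝ)) →L[ℝ] ((Fin n → ℝ) × (Fin n → ℝ))) :=
    fun q => (fderiv ℝ F (Φ q)).comp ((fderiv ℝ Φ q).comp ι) with hHfdef
  have hHfcont : ContinuousOn Hf Ω := by
    apply ContinuousOn.clm_comp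
    · exact (hFC1.continuous_fderiv one_ne_zero).comp_continuousOn hΦC1.continuousOn
    · exact hDcont.clm_comp continuousOn_const
  have hZpart : ∀ s z, (s, z) ∈ Ω →
      HasFDerivAt (fun z' => Φ (s, z')) ((fderiv ℝ Φ (s, z)).comp ι) z := by
    intro s z hq
    exact (hΦdiff _ hq).hasFDerivAt.comp z (hasFDerivAt_prodMk_right s z)
  have hHas : ∀ s z, (s, z) ∈ Ω →
      HasFDerivAt (fun z' => F (Φ (s, z'))) (Hf (s, z)) z := by
    intro s z hq
    exact ((hFC1.differentiable one_ne_zero _).hasFDerivAt).comp z (hZpart s z hq)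
  -- bound on the compact box
  have hK : IsCompact (Metric.closedBall (0:ℝ) δ ×ˢ Metric.closedBall q₀ δ) :=
    (isCompact_closedBall _ _).prod (isCompact_closedBall _ _)
  obtain ⟨C, hC⟩ := hK.exists_bound_of_continuousOn (hHfcont.mono hbox)
  -- membership helpers
  have habs : ∀ t : ℝ, ∀ s ∈ Set.uIcc (0:ℝ) t, |s| ≤ |t| := by
    intro t s hs
    rcases Set.mem_uIcc.1 hs with ⟨h1, h2⟩ | ⟨h1, h2⟩ <;> rw [abs_le] <;>
      constructor <;> linarith [le_abs_self t, neg_abs_le t, abs_nonneg t]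
  have hmemΩ : ∀ t : ℝ, |t| ≤ δ → ∀ s ∈ Set.uIcc (0:ℝ) t,
      ∀ z ∈ Metric.closedBall q₀ δ, (s, z) ∈ Ω := by
    intro t ht s hs z hz
    apply hbox
    refine ⟨?_, hz⟩
    rw [Metric.mem_closedBall, Real.dist_eq, sub_zero]
    exact le_trans (habs t s hs) ht
  -- integral representation of the flow
  have hrep : ∀ t : ℝ, |t| ≤ δ → ∀ z ∈ Metric.closedBall q₀ δ,
      Φ (t, z) = z + ∫ s in (0:ℝ)..t, F (Φ (s, z)) := by
    intro t ht z hz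
    have hmem' := fun s hs => hmemΩ t ht s hs z hz
    have hcont : ContinuousOn (fun s => F (Φ (s, z))) (Set.uIcc 0 t) := by
      apply hFC1.continuous.comp_continuousOn
      apply hΦC1.continuousOn.comp
        ((continuous_id.prodMk continuous_const).continuousOn)
      intro s hs
      exact hmem' s hs
    have heq := intervalIntegral.integral_eq_sub_of_hasDerivAt
      (f := fun s => Φ (s, z)) (f' := fun s => F (Φ (s, z)))
      (fun s hs => hΦflow (s, z) (hmem' s hs)) hcont.intervalIntegrable
    have h0 := hΦ0 z (hmem' 0 Set.left_mem_uIcc)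
    rw [heq]
    simp only [h0]
    abel
  -- the curve of derivatives
  set W : ℝ → (((Fin n → ℝ) × (Fin n → ℝ)) →L[ℝ] ((Fin n → ℝ) × (Fin n → ℝ))) :=
    fun t => ∫ s in (0:ℝ)..t, Hf (s, q₀) with hWdef
  have hq₀mem : q₀ ∈ Metric.closedBall q₀ δ := Metric.mem_closedBall_self hδ.le
  -- derivative of z ↦ Φ (t, z) at q₀
  have hmain : ∀ t : ℝ, |t| ≤ δ →
      HasFDerivAt (fun z => Φ (t, z)) (ContinuousLinearMap.id ℝ _ + W t) q₀ := by
    intro t ht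
    have hInt : HasFDerivAt (fun z => ∫ s in (0:ℝ)..t, F (Φ (s, z))) (W t) q₀ := by
      apply intervalIntegral.hasFDerivAt_integral_of_dominated_of_fderiv_le
        (F' := fun z s => Hf (s, z)) (bound := fun _ => C) (Metric.ball_mem_nhds q₀ hδ)
      · filter_upwards [Metric.ball_mem_nhds q₀ hδ] with z hz
        apply ContinuousOn.aestronglyMeasurable _ measurableSet_uIoc
        have hcont : ContinuousOn (fun s => F (Φ (s, z))) (Set.uIcc 0 t) := by
          apply hFC1.continuous.comp_continuousOn
          apply hΦC1.continuousOn.comp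
            ((continuous_id.prodMk continuous_const).continuousOn)
          intro s hs
          exact hmemΩ t ht s hs z (Metric.ball_subset_closedBall hz)
        exact hcont.mono Set.uIoc_subset_uIcc
      · have hcont : ContinuousOn (fun s => F (Φ (s, q₀))) (Set.uIcc 0 t) := by
          apply hFC1.continuous.comp_continuousOn
          apply hΦC1.continuousOn.comp
            ((continuous_id.prodMk continuous_const).continuousOn)
          intro s hs
          exact hmemΩ t ht s hs q₀ hq₀mem
        exact hcont.intervalIntegrable
      · apply ContinuousOn.aestronglyMeasurable _ measurableSet_uIoc
        have hcont : ContinuousOn (fun s => Hf (s, q₀)) (Set.uIcc 0 t) := by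
          apply hHfcont.comp ((continuous_id.prodMk continuous_const).continuousOn)
          intro s hs
          exact hmemΩ t ht s hs q₀ hq₀mem
        exact hcont.mono Set.uIoc_subset_uIcc
      · apply Filter.Eventually.of_forall
        intro s hs z hz
        apply hC
        refine ⟨?_, Metric.ball_subset_closedBall hz⟩
        rw [Metric.mem_closedBall, Real.dist_eq, sub_zero]
        exact le_trans (habs t s (Set.uIoc_subset_uIcc hs)) ht
      · exact intervalIntegrable_const
      · apply Filter.Eventually.of_forall
        intro s hs z hz
        exact hHas s z (hmemΩ t ht s (Set.uIoc_subset_uIcc hs) z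
          (Metric.ball_subset_closedBall hz))
    have hsum := (hasFDerivAt_id q₀).add hInt
    apply hsum.congr_of_eventuallyEq
    filter_upwards [Metric.ball_mem_nhds q₀ hδ] with z hz
    exact hrep t ht z (Metric.ball_subset_closedBall hz)
  -- M := Hf (0, q₀)
  set M := Hf (0, q₀) with hMdef
  -- fderiv Φ(0,·) at q₀ is the identity
  have hA0 : (fderiv ℝ Φ (0, q₀)).comp ι = ContinuousLinearMap.id ℝ _ := by
    have h0mem : ((0:ℝ), q₀) ∈ Ω := hmem
    have h1 : HasFDerivAt (fun z => Φ (0, z)) ((fderiv ℝ Φ (0, q₀)).comp ι) q₀ :=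
      hZpart 0 q₀ h0mem
    have h2 : HasFDerivAt (fun z => Φ (0, z)) (ContinuousLinearMap.id ℝ _) q₀ := by
      apply (hasFDerivAt_id q₀).congr_of_eventuallyEq
      filter_upwards [Metric.ball_mem_nhds q₀ hδ] with z hz
      exact hΦ0 z (hmemΩ 0 (by simpa using hδ.le) 0 Set.left_mem_uIcc z
        (Metric.ball_subset_closedBall hz))
    exact h1.unique h2
  have hΦ0q₀ : Φ (0, q₀) = q₀ := hΦ0 q₀ hmem
  have hDF : fderiv ℝ F q₀ =
      (ContinuousLinearMap.snd ℝ (Fin n → ℝ) (Fin n → ℝ)).prod (fderiv ℝ S q₀) := by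
    have : HasFDerivAt F
        ((ContinuousLinearMap.snd ℝ (Fin n → ℝ) (Fin n → ℝ)).prod (fderiv ℝ S q₀)) q₀ := by
      rw [hFeq]
      exact (hasFDerivAt_snd).prodMk ((hS.differentiable one_ne_zero q₀).hasFDerivAt)
    exact this.fderiv
  have hMeq : M = fderiv ℝ F q₀ := by
    rw [hMdef, hHfdef]
    simp only [hΦ0q₀, hA0, ContinuousLinearMap.comp_id]
  have hMfst : (ContinuousLinearMap.fst ℝ (Fin n → ℝ) (Fin n → ℝ)).comp (M.comp ιv) =
      ContinuousLinearMap.id ℝ (Fin n → ℝ) := by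
    rw [hMeq, hDF]
    ext v
    simp [hιvdef]
  -- W has derivative M at 0
  have hW0 : HasDerivAt W M 0 := by
    have hcont : ContinuousOn (fun s => Hf (s, q₀)) (Metric.ball (0:ℝ) δ) := by
      apply hHfcont.comp ((continuous_id.prodMk continuous_const).continuousOn)
      intro s hs
      apply hbox
      refine ⟨Metric.ball_subset_closedBall hs, hq₀mem⟩
    have hball0 : Metric.ball (0:ℝ) δ ∈ 𝓝 (0:ℝ) := Metric.ball_mem_nhds 0 hδ
    have := intervalIntegral.integral_hasDerivAt_right
      (f := fun s => Hf (s, q₀)) (a := 0) (b := 0)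
      (by
        apply ContinuousOn.intervalIntegrable
        apply hcont.mono
        simp [Set.uIcc_self, Metric.mem_ball, hδ])
      ⟨Metric.ball (0:ℝ) δ, hball0, hcont.aestronglyMeasurable measurableSet_ball⟩
      (hcont.continuousAt hball0)
    exact this
  have hW00 : W 0 = 0 := intervalIntegral.integral_same
  have hlittle : (fun t => W t - t • M) =o[𝓝 (0:ℝ)] (fun t => t) := by
    have := hasDerivAt_iff_isLittleO.1 hW0
    simpa [hW00] using this
  -- the goal function eventually equals fst ∘ (W t - t • M) ∘ ιv
  have hEv : (fun t : ℝ =>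
      fderiv ℝ (fun v : Fin n → ℝ => (Φ (t, (p, v))).1) 0 -
          t • ContinuousLinearMap.id ℝ (Fin n → ℝ)) =ᶠ[𝓝 (0:ℝ)]
      (fun t : ℝ => (ContinuousLinearMap.fst ℝ (Fin n → ℝ) (Fin n → ℝ)).comp
          ((W t - t • M).comp ιv)) := by
    filter_upwards [Metric.ball_mem_nhds (0:ℝ) hδ] with t ht
    rw [Metric.mem_ball, Real.dist_eq, sub_zero] at ht
    have hAt := hmain t ht.le
    have hpmk : HasFDerivAt (fun v : Fin n → ℝ => (p, v)) ιv (0 : Fin n → ℝ) :=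
      hasFDerivAt_prodMk_right p (0 : Fin n → ℝ)
    have hcomp : HasFDerivAt (fun v : Fin n → ℝ => Φ (t, (p, v)))
        ((ContinuousLinearMap.id ℝ _ + W t).comp ιv) 0 := hAt.comp 0 hpmk
    have hfst := hcomp.fst
    rw [hfst.fderiv]
    refine ContinuousLinearMap.ext fun v => ?_
    have hv := ContinuousLinearMap.ext_iff.1 hMfst v
    simp only [ContinuousLinearMap.coe_comp', Function.comp_apply,
      ContinuousLinearMap.id_apply, ContinuousLinearMap.coe_fst', hιvdef,
      ContinuousLinearMap.inr_apply] at hv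
    simp only [ContinuousLinearMap.sub_apply, ContinuousLinearMap.smul_apply,
      ContinuousLinearMap.coe_comp', Function.comp_apply, ContinuousLinearMap.add_apply,
      ContinuousLinearMap.id_apply, ContinuousLinearMap.coe_fst', hιvdef,
      ContinuousLinearMap.inr_apply, Prod.fst_add, Prod.fst_sub, Prod.smul_fst]
    rw [hv]
    abel
  set L1 := ContinuousLinearMap.fst ℝ (Fin n → ℝ) (Fin n → ℝ) with hL1def
  have hlo : (fun t : ℝ =>
      fderiv ℝ (fun v : Fin n → ℝ => (Φ (t, (p, v))).1) 0 -
        t • ContinuousLinearMap.id ℝ (Fin n → ℝ)) =o[𝓝 (0:ℝ)] (fun t : ℝ => t) := by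
    have hbig : (fun t => L1.comp ((W t - t • M).comp ιv)) =O[𝓝 (0:ℝ)]
        (fun t => W t - t • M) := by
      apply Asymptotics.IsBigO.of_bound (‖L1‖ * ‖ιv‖)
      apply Filter.Eventually.of_forall
      intro t
      have h1 := ContinuousLinearMap.opNorm_comp_le L1 ((W t - t • M).comp ιv)
      have h2 := ContinuousLinearMap.opNorm_comp_le (W t - t • M) ιv
      have h3 : ‖L1‖ * ‖(W t - t • M).comp ιv‖ ≤ ‖L1‖ * (‖W t - t • M‖ * ‖ιv‖) :=
        mul_le_mul_of_nonneg_left h2 (norm_nonneg _)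
      refine le_trans h1 (le_trans h3 (le_of_eq (by ring)))
    exact (hbig.trans_isLittleO hlittle).congr' hEv.symm Filter.EventuallyEq.rfl
  refine ⟨hlo, ?_⟩
  have hsmall := hlo.def one_half_pos
  rw [Metric.eventually_nhds_iff] at hsmall
  obtain ⟨ε₀, hε₀, hH⟩ := hsmall
  refine ⟨ε₀, hε₀, fun t ht0 htε => ?_⟩
  have ht : t ≠ 0 := by
    intro h; rw [h] at ht0; simp at ht0
  have hb := hH (show dist t 0 < ε₀ by rwa [Real.dist_eq, sub_zero])
  rw [Real.norm_eq_abs] at hb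
  have hone : ContinuousLinearMap.id ℝ (Fin n → ℝ) =
      (1 : (Fin n → ℝ) →L[ℝ] (Fin n → ℝ)) := rfl
  rw [hone] at hb
  have hXnorm : ‖t⁻¹ • ((t • (1 : (Fin n → ℝ) →L[ℝ] (Fin n → ℝ))) -
      fderiv ℝ (fun v : Fin n → ℝ => (Φ (t, (p, v))).1) 0)‖ < 1 := by
    rw [norm_smul t⁻¹ ((t • (1 : (Fin n → ℝ) →L[ℝ] (Fin n → ℝ))) -
      fderiv ℝ (fun v : Fin n → ℝ => (Φ (t, (p, v))).1) 0),
      Real.norm_eq_abs, abs_inv, norm_sub_rev]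
    calc |t|⁻¹ * ‖fderiv ℝ (fun v : Fin n → ℝ => (Φ (t, (p, v))).1) 0 -
          t • (1 : (Fin n → ℝ) →L[ℝ] (Fin n → ℝ))‖ ≤ |t|⁻¹ * (1/2 * |t|) := by
          apply mul_le_mul_of_nonneg_left hb (by positivity)
      _ = 1/2 := by field_simp
      _ < 1 := by norm_num
  have hu := (Units.oneSub _ hXnorm).isUnit
  have htunit : IsUnit (t • (1 : (Fin n → ℝ) →L[ℝ] (Fin n → ℝ))) := by
    refine ⟨⟨t • 1, t⁻¹ • 1, ?_, ?_⟩, rfl⟩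
    · rw [smul_mul_assoc, one_mul, smul_smul, mul_inv_cancel₀ ht, one_smul]
    · rw [smul_mul_assoc, one_mul, smul_smul, inv_mul_cancel₀ ht, one_smul]
  have hBfact : fderiv ℝ (fun v : Fin n → ℝ => (Φ (t, (p, v))).1) 0 =
      (t • (1 : (Fin n → ℝ) →L[ℝ] (Fin n → ℝ))) *
        (1 - t⁻¹ • ((t • (1 : (Fin n → ℝ) →L[ℝ] (Fin n → ℝ))) -
          fderiv ℝ (fun v : Fin n → ℝ => (Φ (t, (p, v))).1) 0)) := by
    rw [mul_sub, mul_one, smul_mul_assoc, one_mul, smul_smul,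
      mul_inv_cancel₀ ht, one_smul]
    abel
  rw [hBfact]
  exact htunit.mul hu
end
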